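/- Mutual-intersection removal (Appendix Lemma): Let G be an acyclic mixed graph and E = {(x₁,y),…,(x_k,y)}. There exists a GIS-witness for E with all paths half-treks if and only if there exists such a witness (z₁,W₁,p₁),…,(z_k,W_k,p_k) additionally satisfying: for all i,j, if z_j lies on path p_i then z_i does not lie on path p_j. -/

import Mathlib

open scoped Classical Matrix

namespace SEMPaper

/-- The kind of a step along a path in a mixed graph, relative to the direction of travel:
a forward directed edge, a backward directed edge, or a bidirected edge. -/
inductive EKind : Type
  | fwd | bwd | bi
deriving DecidableEq

/-- An acyclic mixed graph: directed edges `dir`, bidirected edges `bi` (symmetric), with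
acyclic directed part. -/
structure MixedGraph (V : Type) where
  dir : V → V → Prop
  bi : V → V → Prop
  bi_symm : ∀ {i j}, bi i j → bi j i
  acyclic : Irreflexive (Relation.TransGen dir)

namespace MixedGraph

variable {V : Type} (G : MixedGraph V)

/-- `v` is a descendant of `u`: reachable from `u` by a directed path (including `u` itself). -/
def desc (u v : V) : Prop := Relation.ReflTransGen G.dir u v

/-- `G_{E−}`: the graph `G` with the directed edges in `E` deleted. -/
def deleteDir (E : Set (V × V)) : MixedGraph V where
  dir i j := G.dir i j ∧ (i, j) ∉ E
  bi := G.bi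
  bi_symm h := G.bi_symm h
  acyclic v h := G.acyclic v (by
    have key : ∀ a b, Relation.TransGen (fun i j => G.dir i j ∧ (i, j) ∉ E) a b →
        Relation.TransGen G.dir a b := by
      intro a b hh
      induction hh with
      | single hab => exact Relation.TransGen.single hab.1
      | tail _ hab ih => exact Relation.TransGen.tail ih hab.1
    exact key v v h)

/-- Validity of a single step from `a` to `b` of kind `k`. -/
def stepOK (a b : V) : EKind → Prop
  | .fwd => G.dir a b
  | .bwd => G.dir b a
  | .bi => G.bi a b

end MixedGraph

/-- Walks in a mixed graph: sequences of consecutive steps along directed edges (in either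
direction) or bidirected edges. -/
inductive Walk {V : Type} (G : MixedGraph V) : V → V → Type
  | nil (v : V) : Walk G v v
  | cons {a b c : V} (k : EKind) (h : G.stepOK a b k) (w : Walk G b c) : Walk G a c

namespace Walk

variable {V : Type} {G : MixedGraph V}

/-- The list of vertices visited by a walk. -/
def support : ∀ {x y : V}, Walk G x y → List V
  | _, _, .nil v => [v]
  | x, _, .cons _ _ w => x :: w.support

/-- The list of steps of a walk: (source, target, kind). -/
def darts : ∀ {x y : V}, Walk G x y → List (V × V × EKind)
  | _, _, .nil _ => []
  | _, _, @Walk.cons _ _ x b _ k _ w => (x, b, k) :: w.darts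

/-- A path is a walk visiting distinct vertices. -/
def IsPath {x y : V} (w : Walk G x y) : Prop := w.support.Nodup

/-- A vertex with incoming step of kind `kin` and outgoing step of kind `kout` is a collider
iff both adjacent edges point into it. -/
def isColl : EKind → EKind → Bool
  | .fwd, .bwd => true
  | .fwd, .bi => true
  | .bi, .bwd => true
  | .bi, .bi => true
  | _, _ => false

/-- Auxiliary predicate: the walk, whose first vertex was entered via a step of kind `kin`,
is unblocked given `W` (each internal vertex: colliders are in `W` or have a descendant
in `W`; non-colliders are outside `W`). -/
def UnblockedFrom (W : Set V) : ∀ {x y : V}, EKind → Walk G x y → Prop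
  | _, _, _, .nil _ => True
  | x, _, kin, .cons k _ w =>
      (if isColl kin k then ∃ d ∈ W, G.desc x d else x ∉ W) ∧ UnblockedFrom W k w

/-- The walk is unblocked given `W`. -/
def Unblocked (W : Set V) : ∀ {x y : V}, Walk G x y → Prop
  | _, _, .nil _ => True
  | _, _, .cons k _ w => UnblockedFrom W k w

/-- `Left(π)`: the start vertex of `π` together with every vertex with a directed edge of `π`
leaving it in the direction of the start. -/
def Left {x y : V} (w : Walk G x y) : Set V :=
  insert x {v | ∃ a, (a, v, EKind.bwd) ∈ w.darts}

/-- `Right(π)`: the end vertex of `π` together with every vertex with a directed edge of `π`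
leaving it in the direction of the end. -/
def Right {x y : V} (w : Walk G x y) : Set V :=
  insert y {v | ∃ b, (v, b, EKind.fwd) ∈ w.darts}

/-- The walk traverses the directed edge `a → b` (in either direction of travel). -/
def UsesDirEdge {x y : V} (w : Walk G x y) (a b : V) : Prop :=
  (a, b, EKind.fwd) ∈ w.darts ∨ (b, a, EKind.bwd) ∈ w.darts

/-- The directed edges traversed by the walk. -/
def dirEdges {x y : V} (w : Walk G x y) : Set (V × V) :=
  {e | (e.1, e.2, EKind.fwd) ∈ w.darts ∨ (e.2, e.1, EKind.bwd) ∈ w.darts}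

/-- The bidirected edges traversed by the walk (up to orientation). -/
def biEdges {x y : V} (w : Walk G x y) : Set (V × V) :=
  {e | (e.1, e.2, EKind.bi) ∈ w.darts ∨ (e.2, e.1, EKind.bi) ∈ w.darts}

/-- A half-trek from the start vertex: a directed path, optionally preceded by a single
initial bidirected edge. -/
def IsHalfTrek : ∀ {x y : V}, Walk G x y → Prop
  | _, _, .nil _ => True
  | _, _, .cons k _ w => k ≠ EKind.bwd ∧ ∀ d ∈ w.darts, d.2.2 = EKind.fwd

/-- The subpath of `w` from `v` to the end points into `v` (the edge of `w` adjacent to `v` on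
the end-side has its arrowhead at `v`). -/
def pointsBackAt {x y : V} (w : Walk G x y) (v : V) : Prop :=
  ∃ b k, (v, b, k) ∈ w.darts ∧ k ≠ EKind.fwd

/-- The subpath of `w` from the start to `v` points into `v` (the edge of `w` adjacent to `v`
on the start-side has its arrowhead at `v`). -/
def pointsForwardAt {x y : V} (w : Walk G x y) (v : V) : Prop :=
  ∃ a k, (a, v, k) ∈ w.darts ∧ k ≠ EKind.bwd

end Walk

/-- d-separation: `x` and `y` are d-separated given `W` in `G` if no path between them is
unblocked given `W`. -/
def MixedGraph.dsep {V : Type} (G : MixedGraph V) (x y : V) (W : Set V) : Prop :=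
  ∀ w : Walk G x y, w.IsPath → ¬ w.Unblocked W


/-- A GIS-witness for `E = {(x i, y)}`: for each `i`, `W_i` contains no descendants of `y`
and `z_i ⫫ y` given `W_i` in `G_{E−}`; `p_i` is a path between `z_i` and `x_i` unblocked
given `W_i`; and the paths have no sided intersection. -/
def GISWitness {V : Type} (G : MixedGraph V) {k : ℕ} (x : Fin k → V) (y : V)
    (z : Fin k → V) (Wc : Fin k → Set V) (p : ∀ i, Walk G (z i) (x i)) : Prop :=
  (∀ i, (∀ w ∈ Wc i, ¬ G.desc y w) ∧
    (G.deleteDir {e | ∃ j, e = (x j, y)}).dsep (z i) y (Wc i)) ∧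
  (∀ i, (p i).IsPath ∧ (p i).Unblocked (Wc i)) ∧
  (∀ i j, i ≠ j → (p i).Left ∩ (p j).Left = ∅ ∧ (p i).Right ∩ (p j).Right = ∅)

/-! ### Auxiliary infrastructure -/

namespace Walk

variable {V : Type} {G : MixedGraph V}

/-- Append two walks. -/
def append : ∀ {a b c : V}, Walk G a b → Walk G b c → Walk G a c
  | _, _, _, .nil _, w₂ => w₂
  | _, _, _, .cons k h w, w₂ => .cons k h (append w w₂)

@[simp] lemma nil_append {a c : V} (w : Walk G a c) : (Walk.nil a).append w = w := rfl

@[simp] lemma cons_append {a b b' c : V} (k : EKind) (h : G.stepOK a b k)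
    (w : Walk G b b') (w₂ : Walk G b' c) :
    (Walk.cons k h w).append w₂ = Walk.cons k h (w.append w₂) := rfl

@[simp] lemma darts_nil (v : V) : (Walk.nil (G := G) v).darts = [] := rfl

@[simp] lemma darts_cons {a b c : V} (k : EKind) (h : G.stepOK a b k) (w : Walk G b c) :
    (Walk.cons k h w).darts = (a, b, k) :: w.darts := rfl

@[simp] lemma support_nil (v : V) : (Walk.nil (G := G) v).support = [v] := rfl

@[simp] lemma support_cons {a b c : V} (k : EKind) (h : G.stepOK a b k) (w : Walk G b c) :
    (Walk.cons k h w).support = a :: w.support := rfl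

lemma darts_append : ∀ {a b c : V} (w₁ : Walk G a b) (w₂ : Walk G b c),
    (w₁.append w₂).darts = w₁.darts ++ w₂.darts
  | _, _, _, .nil _, w₂ => rfl
  | _, _, _, .cons k h w, w₂ => by simp [darts_append w w₂]

lemma support_append : ∀ {a b c : V} (w₁ : Walk G a b) (w₂ : Walk G b c),
    (w₁.append w₂).support = w₁.support.dropLast ++ w₂.support
  | _, _, _, .nil _, w₂ => rfl
  | _, _, _, .cons k h (.nil _), w₂ => rfl
  | _, _, _, .cons k h (.cons k' h' w), w₂ => by
      have := support_append (Walk.cons k' h' w) w₂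
      simp only [support_cons, cons_append] at *
      simp [this, List.dropLast_cons_of_ne_nil]

/-- Number of steps of a walk. -/
def length {a b : V} (w : Walk G a b) : ℕ := w.darts.length

@[simp] lemma length_nil (v : V) : (Walk.nil (G := G) v).length = 0 := rfl

@[simp] lemma length_cons {a b c : V} (k : EKind) (h : G.stepOK a b k) (w : Walk G b c) :
    (Walk.cons k h w).length = w.length + 1 := rfl

lemma length_append {a b c : V} (w₁ : Walk G a b) (w₂ : Walk G b c) :
    (w₁.append w₂).length = w₁.length + w₂.length := by
  simp [length, darts_append]

/-- The kind of the final step of a walk (or the supplied default for the empty walk). -/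
def endKind : ∀ {a b : V}, EKind → Walk G a b → EKind
  | _, _, κ, .nil _ => κ
  | _, _, _, .cons k _ w => endKind k w

@[simp] lemma endKind_nil (κ : EKind) (v : V) : endKind κ (Walk.nil (G := G) v) = κ := rfl

@[simp] lemma endKind_cons (κ k : EKind) {a b c : V} (h : G.stepOK a b k) (w : Walk G b c) :
    endKind κ (Walk.cons k h w) = endKind k w := rfl

@[simp] lemma unblockedFrom_nil {W : Set V} (κ : EKind) (v : V) :
    UnblockedFrom (G := G) W κ (Walk.nil v) := trivial

lemma unblockedFrom_cons {W : Set V} (κ k : EKind) {a b c : V} (h : G.stepOK a b k)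
    (w : Walk G b c) :
    UnblockedFrom W κ (Walk.cons k h w) ↔
      (if isColl κ k then ∃ d ∈ W, G.desc a d else a ∉ W) ∧ UnblockedFrom W k w := Iff.rfl

lemma unblockedFrom_append {W : Set V} :
    ∀ {a b c : V} (κ : EKind) (w₁ : Walk G a b) (w₂ : Walk G b c),
    UnblockedFrom W κ (w₁.append w₂) ↔
      UnblockedFrom W κ w₁ ∧ UnblockedFrom W (endKind κ w₁) w₂
  | _, _, _, κ, .nil _, w₂ => by simp
  | _, _, _, κ, .cons k h w, w₂ => by
      simp only [cons_append, unblockedFrom_cons, endKind_cons,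
        unblockedFrom_append k w w₂]
      tauto

@[simp] lemma unblocked_nil {W : Set V} (v : V) :
    Unblocked (G := G) W (Walk.nil v) := trivial

lemma unblocked_cons {W : Set V} (k : EKind) {a b c : V} (h : G.stepOK a b k)
    (w : Walk G b c) :
    Unblocked W (Walk.cons k h w) ↔ UnblockedFrom W k w := Iff.rfl

/-- A walk that is `UnblockedFrom` any entry kind is unblocked. -/
lemma unblocked_of_unblockedFrom {W : Set V} {a b : V} (κ : EKind) (w : Walk G a b)
    (h : UnblockedFrom W κ w) : Unblocked W w := by
  cases w with
  | nil v => trivial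
  | cons k hk w => exact ((unblockedFrom_cons κ k hk w).1 h).2

end Walk

namespace Walk

variable {V : Type} {G : MixedGraph V}

lemma support_ne_nil {a b : V} (w : Walk G a b) : w.support ≠ [] := by
  cases w <;> simp

lemma start_mem_support {a b : V} (w : Walk G a b) : a ∈ w.support := by
  cases w <;> simp

@[simp] lemma isColl_right_fwd (κ : EKind) : isColl κ .fwd = false := by
  cases κ <;> rfl

@[simp] lemma isColl_bwd_left (k : EKind) : isColl .bwd k = false := by
  cases k <;> rfl

lemma isColl_eq_false_cases {e k : EKind} (h : isColl e k = false) :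
    e = .bwd ∨ k = .fwd := by
  cases e <;> cases k <;> simp_all [isColl]

lemma isColl_true_left {e k : EKind} (h : isColl e k = true) : e ≠ .bwd := by
  cases e <;> cases k <;> simp_all [isColl]

lemma isColl_true_right {e k : EKind} (h : isColl e k = true) : k ≠ .fwd := by
  cases e <;> cases k <;> simp_all [isColl]

lemma isColl_eq_of_ne_bwd {e e' : EKind} (he : e ≠ .bwd) (he' : e' ≠ .bwd) (k : EKind) :
    isColl e k = isColl e' k := by
  cases e <;> cases e' <;> simp_all <;> cases k <;> rfl

/-- Splitting a walk at (the first occurrence of) a vertex in its support. -/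
lemma exists_split_first {a b v : V} :
    ∀ (w : Walk G a b), v ∈ w.support →
    ∃ (w₁ : Walk G a v) (w₂ : Walk G v b), w = w₁.append w₂ ∧ v ∉ w₁.support.dropLast := by
  intro w
  induction w with
  | nil c =>
    intro hv
    simp only [support_nil, List.mem_singleton] at hv
    subst hv
    exact ⟨Walk.nil v, Walk.nil v, rfl, by simp⟩
  | cons k h w ih =>
    intro hv
    rename_i a' b' c'
    simp only [support_cons, List.mem_cons] at hv
    rcases eq_or_ne v a' with rfl | hva
    · exact ⟨Walk.nil v, Walk.cons k h w, rfl, by simp⟩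
    · have hv' : v ∈ w.support := hv.resolve_left hva
      obtain ⟨u₁, u₂, hw, hnd⟩ := ih hv'
      refine ⟨Walk.cons k h u₁, u₂, by simp [hw], ?_⟩
      have hne := support_ne_nil u₁
      simp only [support_cons]
      rw [List.dropLast_cons_of_ne_nil hne]
      simp only [List.mem_cons]
      rintro (rfl | hmem)
      · exact hva rfl
      · exact hnd hmem

/-- A non-path walk contains a loop. -/
lemma exists_loop_split {a b : V} :
    ∀ (w : Walk G a b), ¬ w.support.Nodup →
    ∃ (v : V) (u₁ : Walk G a v) (u₂ : Walk G v v) (u₃ : Walk G v b),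
      w = u₁.append (u₂.append u₃) ∧ 0 < u₂.length := by
  intro w
  induction w with
  | nil c => intro hnd; exact absurd (by simp) hnd
  | cons k h w ih =>
    intro hnd
    rename_i a' b' c'
    simp only [support_cons, List.nodup_cons, not_and_or] at hnd
    rcases hnd with hmem | hnd'
    · push_neg at hmem
      obtain ⟨u₂', u₃, hw, -⟩ := exists_split_first w hmem
      exact ⟨a', Walk.nil a', Walk.cons k h u₂', u₃, by simp [hw], by simp⟩
    · obtain ⟨v, u₁, u₂, u₃, hw, hlen⟩ := ih hnd'
      exact ⟨v, Walk.cons k h u₁, u₂, u₃, by simp [hw], hlen⟩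

/-- On a walk all of whose steps are forward and which ends in a backward step
(impossible unless...), the start has a descendant in `W`.  Stated for the segment
lemma used in splicing. -/
lemma seg_desc {W : Set V} :
    ∀ {a c : V} (u : Walk G a c), UnblockedFrom W .fwd u → endKind .fwd u = .bwd →
      ∃ d ∈ W, G.desc a d := by
  intro a c u
  induction u with
  | nil v => intro _ he; simp at he
  | cons k h w ih =>
    intro hu he
    rename_i a' b' c'
    rw [unblockedFrom_cons] at hu
    cases k with
    | fwd =>
      obtain ⟨d, hdW, hdesc⟩ := ih hu.2 (by simpa using he)
      exact ⟨d, hdW, Relation.ReflTransGen.head h hdesc⟩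
    | bwd => exact (by simpa [isColl] using hu.1 : ∃ d ∈ W, G.desc a' d)
    | bi => exact (by simpa [isColl] using hu.1 : ∃ d ∈ W, G.desc a' d)

/-- Removing a loop from an unblocked walk preserves unblockedness. -/
lemma unblocked_splice {W : Set V} {a v b : V} (u₁ : Walk G a v) (u₂ : Walk G v v)
    (u₃ : Walk G v b) (h : Unblocked W (u₁.append (u₂.append u₃)))
    (hu₂ : 0 < u₂.length) : Unblocked W (u₁.append u₃) := by
  cases u₂ with
  | nil => simp at hu₂
  | cons k₂ h₂ r₂ =>
    cases u₁ with
    | nil =>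
      -- the loop is at the start
      simp only [nil_append, cons_append, unblocked_cons] at h ⊢
      rw [unblockedFrom_append] at h
      exact unblocked_of_unblockedFrom _ _ h.2
    | cons κ₀ h₀ u₁' =>
      simp only [cons_append, unblocked_cons, unblockedFrom_append] at h ⊢
      obtain ⟨h1, h2⟩ := h
      refine ⟨h1, ?_⟩
      set e := endKind κ₀ u₁' with he
      rw [unblockedFrom_cons] at h2
      obtain ⟨hcond1, h2'⟩ := h2
      rw [unblockedFrom_append] at h2'
      obtain ⟨hu2, hu3⟩ := h2'
      cases u₃ with
      | nil => simp
      | cons k₃ h₃ r₃ =>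
        rw [unblockedFrom_cons] at hu3 ⊢
        refine ⟨?_, hu3.2⟩
        rcases hcol : isColl e k₃ with _ | _
        · -- non-collider case : need v ∉ W
          simp only [hcol, Bool.false_eq_true, if_false]
          rcases isColl_eq_false_cases hcol with he' | hk₃
          · -- e = bwd : use the condition at the first occurrence
            have hf : isColl e k₂ = false := by rw [he']; simp
            simpa [hf] using hcond1
          · -- k₃ = fwd : use the condition at the second occurrence
            subst hk₃
            simpa using hu3.1
        · -- collider case : need a descendant witness
          simp only [hcol, if_true]
          rcases hcol2 : isColl e k₂ with _ | _
          · -- k₂ must be fwd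
            have hk₂ : k₂ = .fwd := by
              rcases isColl_eq_false_cases hcol2 with he' | hk₂
              · exact absurd he' (isColl_true_left hcol)
              · exact hk₂
            subst hk₂
            rcases hcol3 : isColl (endKind EKind.fwd r₂) k₃ with _ | _
            · -- end kind of the loop must be bwd
              have he'' : endKind EKind.fwd r₂ = .bwd := by
                rcases isColl_eq_false_cases hcol3 with h' | h'
                · exact h'
                · exact absurd h' (isColl_true_right hcol)
              obtain ⟨d, hdW, hdesc⟩ := seg_desc r₂ hu2 he''
              exact ⟨d, hdW, Relation.ReflTransGen.head h₂ hdesc⟩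
            · simpa [hcol3] using hu3.1
          · simpa [hcol2] using hcond1

/-- Every unblocked walk yields an unblocked path between the same endpoints. -/
lemma exists_unblocked_path {W : Set V} {a b : V} (w : Walk G a b)
    (h : w.Unblocked W) : ∃ w' : Walk G a b, w'.IsPath ∧ w'.Unblocked W := by
  obtain ⟨n, hn⟩ : ∃ n, w.length ≤ n := ⟨w.length, le_rfl⟩
  induction n generalizing w with
  | zero =>
    by_cases hp : w.support.Nodup
    · exact ⟨w, hp, h⟩
    · obtain ⟨v, u₁, u₂, u₃, hw, hlen⟩ := exists_loop_split w hp
      subst hw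
      simp [length_append] at hn
      omega
  | succ n ih =>
    by_cases hp : w.support.Nodup
    · exact ⟨w, hp, h⟩
    · obtain ⟨v, u₁, u₂, u₃, hw, hlen⟩ := exists_loop_split w hp
      subst hw
      have h' := unblocked_splice u₁ u₂ u₃ h hlen
      have hlen' : (u₁.append u₃).length ≤ n := by
        simp [length_append] at hn ⊢
        omega
      exact ih _ h' hlen'

/-- d-separation implies there is no unblocked *walk*. -/
lemma not_unblocked_of_dsep {W : Set V} {a b : V} (hd : G.dsep a b W)
    (w : Walk G a b) : ¬ w.Unblocked W := by
  intro h
  obtain ⟨w', hw'p, hw'u⟩ := exists_unblocked_path w h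
  exact hd w' hw'p hw'u

end Walk

namespace Walk

variable {V : Type} {G : MixedGraph V}

/-- All steps of the walk are forward steps. -/
def AllFwd {a b : V} (w : Walk G a b) : Prop := ∀ d ∈ w.darts, d.2.2 = EKind.fwd

@[simp] lemma allFwd_nil (v : V) : AllFwd (Walk.nil (G := G) v) := by
  intro d hd; simp at hd

lemma allFwd_cons_iff {a b c : V} (k : EKind) (h : G.stepOK a b k) (w : Walk G b c) :
    AllFwd (Walk.cons k h w) ↔ k = .fwd ∧ AllFwd w := by
  constructor
  · intro hall
    refine ⟨hall (a, b, k) (by simp), fun d hd => hall d (by simp [hd])⟩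
  · rintro ⟨rfl, hall⟩ d hd
    simp only [darts_cons, List.mem_cons] at hd
    rcases hd with rfl | hd
    · rfl
    · exact hall d hd

lemma AllFwd.of_append_left {a b c : V} {w₁ : Walk G a b} {w₂ : Walk G b c}
    (h : AllFwd (w₁.append w₂)) : AllFwd w₁ := fun d hd => h d (by simp [darts_append, hd])

lemma AllFwd.of_append_right {a b c : V} {w₁ : Walk G a b} {w₂ : Walk G b c}
    (h : AllFwd (w₁.append w₂)) : AllFwd w₂ := fun d hd => h d (by simp [darts_append, hd])

/-- For an all-forward walk, being unblocked from any entry kind amounts to the sources of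
its darts avoiding `W`. -/
lemma unblockedFrom_allFwd {W : Set V} :
    ∀ {a b : V} (κ : EKind) (w : Walk G a b), AllFwd w →
      (UnblockedFrom W κ w ↔ ∀ d ∈ w.darts, d.1 ∉ W) := by
  intro a b κ w
  induction w generalizing κ with
  | nil v => intro _; simp
  | cons k h w ih =>
    intro hall
    rw [allFwd_cons_iff] at hall
    obtain ⟨rfl, hall⟩ := hall
    rw [unblockedFrom_cons]
    simp only [isColl_right_fwd, Bool.false_eq_true, if_false, darts_cons, List.mem_cons]
    rw [ih .fwd hall]
    constructor
    · rintro ⟨h1, h2⟩ d (rfl | hd)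
      · exact h1
      · exact h2 d hd
    · intro hd
      exact ⟨hd _ (Or.inl rfl), fun d hdd => hd d (Or.inr hdd)⟩

/-- Every vertex of an all-forward walk reaches the end by directed steps. -/
lemma allFwd_desc_end : ∀ {a b : V} (w : Walk G a b), AllFwd w →
    ∀ v ∈ w.support, Relation.ReflTransGen G.dir v b := by
  intro a b w
  induction w with
  | nil c => intro _ v hv; simp at hv; subst hv; exact Relation.ReflTransGen.refl
  | cons k h w ih =>
    intro hall v hv
    rw [allFwd_cons_iff] at hall
    obtain ⟨rfl, hall⟩ := hall
    simp only [support_cons, List.mem_cons] at hv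
    rcases hv with rfl | hv
    · exact Relation.ReflTransGen.head h (ih hall _ (start_mem_support w))
    · exact ih hall v hv

/-- Every vertex of an all-forward walk is reachable from the start by directed steps. -/
lemma allFwd_desc_start : ∀ {a b : V} (w : Walk G a b), AllFwd w →
    ∀ v ∈ w.support, Relation.ReflTransGen G.dir a v := by
  intro a b w
  induction w with
  | nil c => intro _ v hv; simp at hv; subst hv; exact Relation.ReflTransGen.refl
  | cons k h w ih =>
    intro hall v hv
    rw [allFwd_cons_iff] at hall
    obtain ⟨rfl, hall⟩ := hall
    simp only [support_cons, List.mem_cons] at hv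
    rcases hv with rfl | hv
    · exact Relation.ReflTransGen.refl
    · exact Relation.ReflTransGen.head h (ih hall v hv)

/-- Membership in `Right`. -/
lemma mem_Right_iff {a b : V} (w : Walk G a b) (v : V) :
    v ∈ w.Right ↔ v = b ∨ ∃ u, (v, u, EKind.fwd) ∈ w.darts := by
  unfold Right
  simp [Set.mem_insert_iff]

/-- Membership in `Left`. -/
lemma mem_Left_iff {a b : V} (w : Walk G a b) (v : V) :
    v ∈ w.Left ↔ v = a ∨ ∃ u, (u, v, EKind.bwd) ∈ w.darts := by
  unfold Left
  simp [Set.mem_insert_iff]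

/-- Every non-final vertex of a walk is the source of one of its darts. -/
lemma exists_out_dart : ∀ {a b : V} (w : Walk G a b), ∀ v ∈ w.support, v ≠ b →
    ∃ u k, (v, u, k) ∈ w.darts := by
  intro a b w
  induction w with
  | nil c => intro v hv hvb; simp at hv; exact absurd hv hvb
  | cons k h w ih =>
    intro v hv hvb
    simp only [support_cons, List.mem_cons] at hv
    rcases hv with rfl | hv
    · rename_i bmid _
      exact ⟨bmid, k, by simp⟩
    · obtain ⟨u, k', hk⟩ := ih v hv hvb
      exact ⟨u, k', by simp [hk]⟩

lemma dart_src_mem_support : ∀ {a b : V} (w : Walk G a b), ∀ d ∈ w.darts,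
    d.1 ∈ w.support := by
  intro a b w
  induction w with
  | nil c => intro d hd; simp at hd
  | cons k h w ih =>
    intro d hd
    simp only [darts_cons, List.mem_cons] at hd
    rcases hd with rfl | hd
    · simp
    · simp [ih d hd]

/-- A walk with no backward darts has `Left` equal to its start. -/
lemma Left_eq_start {a b : V} (w : Walk G a b)
    (h : ∀ d ∈ w.darts, d.2.2 ≠ EKind.bwd) : w.Left = {a} := by
  ext v
  rw [mem_Left_iff]
  simp only [Set.mem_singleton_iff]
  constructor
  · rintro (rfl | ⟨u, hu⟩)
    · rfl
    · exact absurd rfl (h _ hu)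
  · rintro rfl; exact Or.inl rfl

/-- A half-trek has no backward darts. -/
lemma IsHalfTrek.no_bwd {a b : V} {w : Walk G a b} (h : w.IsHalfTrek) :
    ∀ d ∈ w.darts, d.2.2 ≠ EKind.bwd := by
  cases w with
  | nil => intro d hd; simp at hd
  | cons k hk w =>
    obtain ⟨h1, h2⟩ := h
    intro d hd
    simp only [darts_cons, List.mem_cons] at hd
    rcases hd with rfl | hd
    · exact h1
    · rw [h2 d hd]; simp

/-- In a half-trek, every support vertex other than the start lies in `Right`. -/
lemma IsHalfTrek.mem_Right {a b : V} {w : Walk G a b} (h : w.IsHalfTrek)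
    {v : V} (hv : v ∈ w.support) (hva : v ≠ a) : v ∈ w.Right := by
  cases w with
  | nil => simp at hv; exact absurd hv hva
  | cons k hk w =>
    obtain ⟨-, h2⟩ := h
    simp only [support_cons, List.mem_cons] at hv
    rcases hv with rfl | hv
    · exact absurd rfl hva
    · by_cases hvb : v = b
      · exact (mem_Right_iff _ v).2 (Or.inl hvb)
      · obtain ⟨u, k', hk'⟩ := exists_out_dart w v hv hvb
        have hf : k' = EKind.fwd := h2 _ hk'
        subst hf
        exact (mem_Right_iff _ v).2 (Or.inr ⟨u, by simp [hk']⟩)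

/-- The start of a walk whose first step is forward is in `Right`. -/
lemma mem_Right_start_of_fwd {a b c : V} (h : G.stepOK a b .fwd) (w : Walk G b c) :
    a ∈ (Walk.cons .fwd h w).Right :=
  (mem_Right_iff _ a).2 (Or.inr ⟨b, by simp⟩)

@[simp] lemma Right_nil (v : V) : (Walk.nil (G := G) v).Right = {v} := by
  ext u
  rw [mem_Right_iff]
  simp

end Walk

namespace Walk

variable {V : Type} {G : MixedGraph V}

lemma allFwd_append {a b c : V} {w₁ : Walk G a b} {w₂ : Walk G b c}
    (h₁ : AllFwd w₁) (h₂ : AllFwd w₂) : AllFwd (w₁.append w₂) := by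
  intro d hd
  rw [darts_append, List.mem_append] at hd
  rcases hd with hd | hd
  · exact h₁ d hd
  · exact h₂ d hd

lemma endKind_ne_bwd {a b : V} {κ : EKind} (hκ : κ ≠ .bwd) {w : Walk G a b}
    (h : AllFwd w) : endKind κ w ≠ .bwd := by
  induction w generalizing κ with
  | nil => simpa using hκ
  | cons k hk w ih =>
    rw [allFwd_cons_iff] at h
    obtain ⟨rfl, h⟩ := h
    simpa using ih (by simp) h

/-- Transfer a walk avoiding `y` into the graph with edges into `y` deleted. -/
lemma exists_del_walk {Es : Set (V × V)} {y : V} (hEs : ∀ e ∈ Es, e.2 = y)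
    {a b : V} (w : Walk G a b) (hy : y ∉ w.support) :
    ∃ w' : Walk (G.deleteDir Es) a b, w'.darts = w.darts ∧ w'.support = w.support := by
  induction w with
  | nil v => exact ⟨Walk.nil v, rfl, rfl⟩
  | cons k h w ih =>
    rename_i a' b' c'
    simp only [support_cons, List.mem_cons, not_or] at hy
    obtain ⟨hya, hyw⟩ := hy
    obtain ⟨w', hd, hs⟩ := ih hyw
    have hstep : (G.deleteDir Es).stepOK a' b' k := by
      cases k with
      | fwd =>
        refine ⟨h, fun hmem => ?_⟩
        have : b' = y := hEs _ hmem
        exact hyw (this ▸ start_mem_support w)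
      | bwd =>
        refine ⟨h, fun hmem => ?_⟩
        have : a' = y := hEs _ hmem
        exact hya this.symm
      | bi => exact h
    exact ⟨Walk.cons k hstep w', by simp [hd], by simp [hs]⟩

/-- Build an all-forward walk from a directed reachability statement. -/
lemma exists_allFwd_walk {a b : V} (h : Relation.ReflTransGen G.dir a b) :
    ∃ w : Walk G a b, AllFwd w := by
  induction h with
  | refl => exact ⟨Walk.nil a, by simp⟩
  | tail hab hbc ih =>
    obtain ⟨w, hw⟩ := ih
    refine ⟨w.append (Walk.cons .fwd hbc (Walk.nil _)), allFwd_append hw ?_⟩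
    intro d hd
    change d ∈ [(_, _, EKind.fwd)] at hd
    simp only [List.mem_singleton] at hd
    subst hd; rfl

end Walk

lemma MixedGraph.dsep.ne {V : Type} {G : MixedGraph V} {a b : V} {W : Set V}
    (h : G.dsep a b W) : a ≠ b := by
  rintro rfl
  exact h (Walk.nil a) (by simp [Walk.IsPath]) trivial

lemma rtg_transGen_of_ne {V : Type} {r : V → V → Prop} {a b : V}
    (h : Relation.ReflTransGen r a b) (hne : a ≠ b) : Relation.TransGen r a b := by
  rcases (Relation.reflTransGen_iff_eq_or_transGen.1 h) with rfl | h'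
  · exact absurd rfl hne
  · exact h'

namespace Walk

variable {V : Type} {H : MixedGraph V}

/-- Key induction (forward runs): following a forward step from a strict descendant of `z2`,
an unblocked-from-`fwd` continuation to `y` is impossible when the conditioning set avoids
descendants of `z2` and no descendant of `z2` is an ancestor of `y`. -/
lemma desc_run_false {z2 : V} {Wst : Set V}
    (hWst : ∀ d ∈ Wst, ¬ Relation.ReflTransGen H.dir z2 d) :
    ∀ {b y : V} (r : Walk H b y),
      (∀ v, Relation.ReflTransGen H.dir z2 v → Relation.ReflTransGen H.dir v y → False) →
      UnblockedFrom Wst .fwd r → Relation.TransGen H.dir z2 b → False := by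
  intro b y r
  induction r with
  | nil v => intro SA2 _ htg; exact SA2 v htg.to_reflTransGen Relation.ReflTransGen.refl
  | cons k h w ih =>
    intro SA2 hu htg
    rw [unblockedFrom_cons] at hu
    cases k with
    | fwd => exact ih SA2 hu.2 (htg.tail h)
    | bwd =>
      obtain ⟨d, hdW, hdesc⟩ := (by simpa [isColl] using hu.1 : ∃ d ∈ Wst, H.desc _ d)
      exact hWst d hdW (htg.to_reflTransGen.trans hdesc)
    | bi =>
      obtain ⟨d, hdW, hdesc⟩ := (by simpa [isColl] using hu.1 : ∃ d ∈ Wst, H.desc _ d)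
      exact hWst d hdW (htg.to_reflTransGen.trans hdesc)

/-- Key transfer: a walk to `y` unblocked given `Wst = W2 \ desc(z2)` and avoiding `z2`
is unblocked given `W2` itself. -/
lemma unblockedFrom_W2_of_Wst {z2 : V} {W2 Wst : Set V}
    (hsub : Wst ⊆ W2)
    (hmem : ∀ w ∈ W2, w ∉ Wst → Relation.ReflTransGen H.dir z2 w)
    (hWst : ∀ d ∈ Wst, ¬ Relation.ReflTransGen H.dir z2 d) :
    ∀ {a y : V} (κ : EKind) (r : Walk H a y),
      (∀ v, Relation.ReflTransGen H.dir z2 v → Relation.ReflTransGen H.dir v y → False) →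
      UnblockedFrom Wst κ r → z2 ∉ r.support →
      (κ = .bwd → Relation.TransGen H.dir z2 a → False) → UnblockedFrom W2 κ r := by
  intro a y κ r
  induction r generalizing κ with
  | nil v => intro _ _ _ _; trivial
  | cons k h w ih =>
    intro SA2 hu hz2 hκ
    rename_i a' b' c'
    rw [unblockedFrom_cons] at hu ⊢
    simp only [support_cons, List.mem_cons, not_or] at hz2
    obtain ⟨hz2a, hz2w⟩ := hz2
    have haz2 : a' ≠ z2 := fun hh => hz2a hh.symm
    have hstrict : a' ∈ W2 → a' ∉ Wst → Relation.TransGen H.dir z2 a' := fun h1 h2 =>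
      rtg_transGen_of_ne (hmem a' h1 h2) (fun hh => haz2 hh.symm)
    constructor
    · by_cases hcol : isColl κ k
      · obtain ⟨d, hdW, hdesc⟩ := (by simpa [hcol] using hu.1 : ∃ d ∈ Wst, H.desc _ d)
        simp only [hcol, if_true]
        exact ⟨d, hsub hdW, hdesc⟩
      · have haWst : a' ∉ Wst := by simpa [hcol] using hu.1
        simp only [hcol, Bool.false_eq_true, if_false]
        intro haW2
        have htg : Relation.TransGen H.dir z2 a' := hstrict haW2 haWst
        rcases isColl_eq_false_cases (by simpa using hcol) with hκb | hkf
        · -- κ = bwd : impossible entry into a strict descendant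
          exact hκ hκb htg
        · -- k = fwd : run forward to a contradiction
          subst hkf
          exact desc_run_false hWst w SA2 hu.2 (htg.tail h)
    · refine ih k SA2 hu.2 hz2w ?_
      intro hk htgb
      subst hk
      -- h : H.dir b' a'
      have htga : Relation.TransGen H.dir z2 a' := htgb.tail h
      by_cases hcol : isColl κ .bwd
      · obtain ⟨d, hdW, hdesc⟩ := (by simpa [hcol] using hu.1 : ∃ d ∈ Wst, H.desc _ d)
        exact hWst d hdW (htga.to_reflTransGen.trans hdesc)
      · have hκb : κ = .bwd := by
          cases κ <;> simp_all [isColl]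
        exact hκ hκb htga
end Walk

namespace Walk

variable {V : Type}

lemma mem_support_append_left {G : MixedGraph V} {a b c v : V} :
    ∀ (w₁ : Walk G a b) (w₂ : Walk G b c), v ∈ w₁.support → v ∈ (w₁.append w₂).support := by
  intro w₁
  induction w₁ with
  | nil u => intro w₂ hv; simp at hv; subst hv; simp [start_mem_support]
  | cons k h w ih =>
    intro w₂ hv
    simp only [support_cons, List.mem_cons] at hv
    rcases hv with rfl | hv
    · simp
    · simp [ih w₂ hv]

lemma mem_support_append_right {G : MixedGraph V} {a b c v : V}
    (w₁ : Walk G a b) (w₂ : Walk G b c) (hv : v ∈ w₂.support) :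
    v ∈ (w₁.append w₂).support := by
  rw [support_append, List.mem_append]
  exact Or.inr hv

lemma endKind_eq_of_darts {G G' : MixedGraph V} :
    ∀ {a b a' b' : V} (w : Walk G a b) (w' : Walk G' a' b'), w.darts = w'.darts →
      ∀ κ, endKind κ w = endKind κ w' := by
  intro a b a' b' w
  induction w generalizing a' b' with
  | nil u =>
    intro w' hd κ
    cases w' with
    | nil => rfl
    | cons k' h' ww' => simp at hd
  | cons k h w ih =>
    intro w' hd κ
    cases w' with
    | nil => simp at hd
    | cons k' h' ww' =>
      simp only [darts_cons, List.cons.injEq, Prod.mk.injEq] at hd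
      obtain ⟨⟨-, -, hk⟩, htail⟩ := hd
      subst hk
      simpa using ih ww' htail k

end Walk

open Walk in
/-- **Core separator existence.**  If `P ++ A` is an unblocked half-trek from `z1` through
`z2` to `x1`, and both `z1` and `z2` are d-separated from `y` (in the edge-deleted graph)
by `W1`, `W2` respectively, then `z2` can be d-separated from `y` by a set that leaves the
directed suffix `A` unblocked. -/
lemma exists_sep {G : MixedGraph V} {Es : Set (V × V)} {y : V}
    (hEs : ∀ e ∈ Es, e.2 = y) {z1 z2 x1 : V} {W1 W2 : Set V}
    (P : Walk G z1 z2) (A : Walk G z2 x1)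
    (hht : (P.append A).IsHalfTrek)
    (hunb : (P.append A).Unblocked W1)
    (hne : z1 ≠ z2)
    (h1 : (G.deleteDir Es).dsep z1 y W1)
    (h2 : (G.deleteDir Es).dsep z2 y W2)
    (hx1y : G.dir x1 y) :
    ∃ Wst : Set V, Wst ⊆ W1 ∪ W2 ∧ (G.deleteDir Es).dsep z2 y Wst ∧ A.Unblocked Wst := by
  cases A with
  | nil => exact ⟨W2, Set.subset_union_right, h2, trivial⟩
  | cons kA hkA A' =>
    rename_i bA
    cases P with
    | nil => exact absurd rfl hne
    | cons k₀ hk₀ P' =>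
      rename_i b₀
      rw [cons_append] at hht hunb
      obtain ⟨hk₀ne, hallPA⟩ := hht
      have hallPA : AllFwd (P'.append (Walk.cons kA hkA A')) := hallPA
      have hallP' : AllFwd P' := hallPA.of_append_left
      have hallA : AllFwd (Walk.cons kA hkA A') := hallPA.of_append_right
      have hkAf : kA = EKind.fwd := hallA (z2, bA, kA) (by simp)
      subst hkAf
      have hallA' : AllFwd A' := (allFwd_cons_iff _ _ _).1 hallA |>.2
      have hUF : UnblockedFrom W1 k₀ (P'.append (Walk.cons .fwd hkA A')) := hunb
      have hsrc : ∀ d ∈ (P'.append (Walk.cons .fwd hkA A')).darts, d.1 ∉ W1 :=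
        (unblockedFrom_allFwd _ _ hallPA).1 hUF
      -- `y` does not occur on the directed part
      have hy_not : ∀ v ∈ (P'.append (Walk.cons .fwd hkA A')).support, v ≠ y := by
        intro v hv hvy
        rw [hvy] at hv
        have hr : Relation.ReflTransGen G.dir y x1 := allFwd_desc_end _ hallPA y hv
        exact G.acyclic y (Relation.TransGen.tail' hr hx1y)
      have hyP' : y ∉ P'.support := fun h =>
        hy_not y (mem_support_append_left P' _ h) rfl
      have hyA : y ∉ (Walk.cons .fwd hkA A').support := fun h =>
        hy_not y (mem_support_append_right P' _ h) rfl
      have hz2W1 : z2 ∉ W1 :=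
        hsrc (z2, bA, .fwd) (by rw [darts_append]; simp)
      -- the deleted-graph versions of the pieces
      obtain ⟨P'H, hPd, hPs⟩ := exists_del_walk hEs P' hyP'
      obtain ⟨AH, hAHd, hAHs⟩ := exists_del_walk hEs (Walk.cons .fwd hkA A') hyA
      have hallP'H : AllFwd P'H := fun d hd => hallP' d (hPd ▸ hd)
      have hallAH : AllFwd AH := fun d hd => hallA d (hAHd ▸ hd)
      have hk₀H : (G.deleteDir Es).stepOK z1 b₀ k₀ := by
        cases k₀ with
        | fwd =>
          refine ⟨hk₀, fun hmem => ?_⟩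
          have hb₀y : b₀ = y := hEs _ hmem
          exact hy_not b₀ (start_mem_support _) hb₀y
        | bwd => exact absurd rfl hk₀ne
        | bi => exact hk₀
      -- the prefix of the half-trek is unblocked in the deleted graph
      have hprefUF : UnblockedFrom (G := G.deleteDir Es) W1 k₀ P'H := by
        refine (unblockedFrom_allFwd _ _ hallP'H).2 ?_
        intro dd hdd
        exact hsrc dd (by rw [hPd] at hdd; rw [darts_append]; exact List.mem_append_left _ hdd)
      by_cases hd2 : (G.deleteDir Es).dsep z2 y W1
      · -- Case 1 : `W1` itself works
        refine ⟨W1, Set.subset_union_left, hd2, ?_⟩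
        show UnblockedFrom W1 .fwd A'
        refine (unblockedFrom_allFwd _ _ hallA').2 ?_
        intro d hd
        exact hsrc d (by rw [darts_append]; simp [hd])
      · -- Case 2 : use `W2` minus the descendants of `z2`
        simp only [MixedGraph.dsep, not_forall, not_not] at hd2
        obtain ⟨q, hqp, hqu⟩ := hd2
        -- SA1 : no descendant of `z2` lies in `W1`
        have SA1 : ∀ d ∈ W1, ¬ Relation.ReflTransGen (G.deleteDir Es).dir z2 d := by
          intro d hdW hdesc
          cases q with
          | nil => exact h2.ne rfl
          | cons κq hκq q' =>
            have hω : Unblocked W1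
                (Walk.cons k₀ hk₀H (P'H.append (Walk.cons κq hκq q'))) := by
              show UnblockedFrom W1 k₀ (P'H.append (Walk.cons κq hκq q'))
              rw [unblockedFrom_append]
              refine ⟨hprefUF, ?_⟩
              rw [unblockedFrom_cons]
              refine ⟨?_, hqu⟩
              by_cases hcol : isColl (endKind k₀ P'H) κq
              · simp only [hcol, if_true]
                exact ⟨d, hdW, hdesc⟩
              · simp only [hcol, Bool.false_eq_true, if_false]
                exact hz2W1
            exact not_unblocked_of_dsep h1 _ hω
        -- SA2 : no descendant of `z2` is an ancestor of `y` in the deleted graph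
        have SA2 : ∀ v, Relation.ReflTransGen (G.deleteDir Es).dir z2 v →
            Relation.ReflTransGen (G.deleteDir Es).dir v y → False := by
          intro v hzv hvy
          obtain ⟨C, hC⟩ := exists_allFwd_walk (hzv.trans hvy)
          have hω : Unblocked W1 (Walk.cons k₀ hk₀H (P'H.append C)) := by
            show UnblockedFrom W1 k₀ (P'H.append C)
            rw [unblockedFrom_append]
            refine ⟨hprefUF, ?_⟩
            refine (unblockedFrom_allFwd _ _ hC).2 ?_
            intro dd hdd hddW1
            exact SA1 dd.1 hddW1 (allFwd_desc_start C hC dd.1 (dart_src_mem_support C dd hdd))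
          exact not_unblocked_of_dsep h1 _ hω
        refine ⟨W2 \ {w | Relation.ReflTransGen (G.deleteDir Es).dir z2 w},
          fun w hw => Or.inr hw.1, ?_, ?_⟩
        · -- d-separation of z2 from y
          intro s hsp hsu
          cases s with
          | nil => exact h2.ne rfl
          | cons ks hks s' =>
            rename_i bs
            have hnotin : z2 ∉ s'.support := by
              have := hsp
              simp only [IsPath, support_cons, List.nodup_cons] at this
              exact this.1
            have hentry : ks = EKind.bwd →
                Relation.TransGen (G.deleteDir Es).dir z2 bs → False := by
              intro hk htg
              subst hk
              exact (G.deleteDir Es).acyclic z2 (htg.tail hks)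
            have htrans := unblockedFrom_W2_of_Wst
              (Set.diff_subset)
              (fun w hw hnw => by
                by_contra hcon
                exact hnw ⟨hw, hcon⟩)
              (fun d hd => hd.2)
              ks s' SA2 hsu hnotin hentry
            exact h2 (Walk.cons ks hks s') hsp htrans
        · -- the suffix stays unblocked
          show UnblockedFrom _ .fwd A'
          refine (unblockedFrom_allFwd _ _ hallA').2 ?_
          intro dd hdd hmem
          refine hmem.2 ?_
          have hddH : dd ∈ AH.darts := by rw [hAHd]; simp [hdd]
          exact allFwd_desc_start AH hallAH dd.1 (dart_src_mem_support AH dd hddH)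

namespace Walk

variable {V : Type} {G : MixedGraph V}

/-- Transport a walk along equalities of its endpoints. -/
def copy {a b a' b' : V} (w : Walk G a b) (ha : a = a') (hb : b = b') : Walk G a' b' :=
  ha ▸ hb ▸ w

@[simp] lemma support_copy {a b a' b' : V} (w : Walk G a b) (ha : a = a') (hb : b = b') :
    (w.copy ha hb).support = w.support := by subst ha; subst hb; rfl

@[simp] lemma darts_copy {a b a' b' : V} (w : Walk G a b) (ha : a = a') (hb : b = b') :
    (w.copy ha hb).darts = w.darts := by subst ha; subst hb; rfl

@[simp] lemma length_copy {a b a' b' : V} (w : Walk G a b) (ha : a = a') (hb : b = b') :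
    (w.copy ha hb).length = w.length := by subst ha; subst hb; rfl

@[simp] lemma isPath_copy {a b a' b' : V} (w : Walk G a b) (ha : a = a') (hb : b = b') :
    (w.copy ha hb).IsPath ↔ w.IsPath := by subst ha; subst hb; rfl

@[simp] lemma unblocked_copy {W : Set V} {a b a' b' : V} (w : Walk G a b) (ha : a = a')
    (hb : b = b') : (w.copy ha hb).Unblocked W ↔ w.Unblocked W := by
  subst ha; subst hb; rfl

@[simp] lemma isHalfTrek_copy {a b a' b' : V} (w : Walk G a b) (ha : a = a') (hb : b = b') :
    (w.copy ha hb).IsHalfTrek ↔ w.IsHalfTrek := by subst ha; subst hb; rfl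

@[simp] lemma left_copy {a b a' b' : V} (w : Walk G a b) (ha : a = a') (hb : b = b') :
    (w.copy ha hb).Left = w.Left := by subst ha; subst hb; rfl

@[simp] lemma right_copy {a b a' b' : V} (w : Walk G a b) (ha : a = a') (hb : b = b') :
    (w.copy ha hb).Right = w.Right := by subst ha; subst hb; rfl

/-- An all-forward walk is a half-trek. -/
lemma IsHalfTrek.of_allFwd {a b : V} {w : Walk G a b} (h : AllFwd w) : w.IsHalfTrek := by
  cases w with
  | nil => trivial
  | cons k hk w =>
    rw [allFwd_cons_iff] at h
    obtain ⟨rfl, h⟩ := h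
    exact ⟨by simp, h⟩

/-- The `Right` set of a suffix is contained in that of the whole walk. -/
lemma Right_suffix_subset {a b c : V} (w₁ : Walk G a b) (w₂ : Walk G b c) :
    w₂.Right ⊆ (w₁.append w₂).Right := by
  intro v hv
  rw [mem_Right_iff] at hv ⊢
  rcases hv with rfl | ⟨u, hu⟩
  · exact Or.inl rfl
  · exact Or.inr ⟨u, by rw [darts_append]; exact List.mem_append_right _ hu⟩

/-- A suffix of a path is a path. -/
lemma IsPath.of_append_right {a b c : V} {w₁ : Walk G a b} {w₂ : Walk G b c}
    (h : (w₁.append w₂).IsPath) : w₂.IsPath := by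
  unfold IsPath at h ⊢
  rw [support_append] at h
  exact (List.nodup_append.1 h).2.1

end Walk

open Walk in
/-- Disjointness of the sided sets transfers to new paths with singleton `Left` sets,
pairwise-distinct sources, and smaller `Right` sets. -/
lemma sided_of {V : Type} {G : MixedGraph V} {k : ℕ} {x : Fin k → V}
    {ζ : Fin k → V} (q : ∀ l, Walk G (ζ l) (x l))
    (hL : ∀ l, (q l).Left = {ζ l}) (hdist : ∀ l m, l ≠ m → ζ l ≠ ζ m)
    {z : Fin k → V} {p : ∀ l, Walk G (z l) (x l)}
    (hR : ∀ l, (q l).Right ⊆ (p l).Right)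
    (hside : ∀ l m, l ≠ m → (p l).Left ∩ (p m).Left = ∅ ∧ (p l).Right ∩ (p m).Right = ∅) :
    ∀ l m, l ≠ m → (q l).Left ∩ (q m).Left = ∅ ∧ (q l).Right ∩ (q m).Right = ∅ := by
  intro l m hlm
  constructor
  · rw [hL l, hL m]
    ext v
    simp only [Set.mem_inter_iff, Set.mem_singleton_iff, Set.mem_empty_iff_false, iff_false,
      not_and]
    rintro rfl
    exact hdist l m hlm
  · apply Set.eq_empty_of_subset_empty
    calc (q l).Right ∩ (q m).Right ⊆ (p l).Right ∩ (p m).Right :=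
          Set.inter_subset_inter (hR l) (hR m)
    _ = ∅ := (hside l m hlm).2

open Walk in
/-- Swapping the two members of a mutually-intersecting pair for the suffixes of their paths
yields a witness of strictly smaller total length. -/
lemma swap_witness {V : Type} {G : MixedGraph V} {k : ℕ} {x : Fin k → V} {y : V}
    {z : Fin k → V} {Wc : Fin k → Set V} {p : ∀ l, Walk G (z l) (x l)}
    (hgis : GISWitness G x y z Wc p) (hht : ∀ l, (p l).IsHalfTrek)
    {i j : Fin k} (hij : i ≠ j)
    (A : Walk G (z j) (x i)) (B : Walk G (z i) (x j)) (Wi' Wj' : Set V)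
    (hApath : A.IsPath) (hAunb : A.Unblocked Wi') (hAht : A.IsHalfTrek)
    (hARight : A.Right ⊆ (p i).Right) (hAlen : A.length < (p i).length)
    (hBpath : B.IsPath) (hBunb : B.Unblocked Wj') (hBht : B.IsHalfTrek)
    (hBRight : B.Right ⊆ (p j).Right) (hBlen : B.length < (p j).length)
    (hWi'sub : Wi' ⊆ Wc i ∪ Wc j)
    (hWi'dsep : (G.deleteDir {e | ∃ m, e = (x m, y)}).dsep (z j) y Wi')
    (hWj'sub : Wj' ⊆ Wc i ∪ Wc j)
    (hWj'dsep : (G.deleteDir {e | ∃ m, e = (x m, y)}).dsep (z i) y Wj') :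
    ∃ (z' : Fin k → V) (Wc' : Fin k → Set V) (p' : ∀ l, Walk G (z' l) (x l)),
      GISWitness G x y z' Wc' p' ∧ (∀ l, (p' l).IsHalfTrek) ∧
      (∑ l, (p' l).length) < (∑ l, (p l).length) := by
  obtain ⟨hdse, hpu, hside⟩ := hgis
  have hji : j ≠ i := Ne.symm hij
  have hLeft : ∀ l, (p l).Left = {z l} := fun l => Left_eq_start _ (hht l).no_bwd
  have hzdist : ∀ l m, l ≠ m → z l ≠ z m := by
    intro l m hlm heq
    have hh := (hside l m hlm).1
    rw [hLeft l, hLeft m, heq] at hh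
    have hmem : z m ∈ ({z m} : Set V) ∩ {z m} := ⟨rfl, rfl⟩
    rw [hh] at hmem
    exact hmem
  have hLeftA : A.Left = {z j} := Left_eq_start _ hAht.no_bwd
  have hLeftB : B.Left = {z i} := Left_eq_start _ hBht.no_bwd
  have hz'dist : ∀ l m : Fin k, l ≠ m →
      (if l = i then z j else if l = j then z i else z l) ≠
      (if m = i then z j else if m = j then z i else z m) := by
    intro l m hlm
    by_cases hl1 : l = i
    · simp only [if_pos hl1]
      by_cases hm1 : m = i
      · exact absurd (hl1.trans hm1.symm) hlm
      · by_cases hm2 : m = j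
        · simp only [if_neg hm1, if_pos hm2]
          exact hzdist j i hji
        · simp only [if_neg hm1, if_neg hm2]
          exact hzdist j m (fun hh => hm2 hh.symm)
    · by_cases hl2 : l = j
      · simp only [if_neg hl1, if_pos hl2]
        by_cases hm1 : m = i
        · simp only [if_pos hm1]
          exact hzdist i j hij
        · by_cases hm2 : m = j
          · exact absurd (hl2.trans hm2.symm) hlm
          · simp only [if_neg hm1, if_neg hm2]
            exact hzdist i m (fun hh => hm1 hh.symm)
      · simp only [if_neg hl1, if_neg hl2]
        by_cases hm1 : m = i
        · simp only [if_pos hm1]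
          exact hzdist l j hl2
        · by_cases hm2 : m = j
          · simp only [if_neg hm1, if_pos hm2]
            exact hzdist l i hl1
          · simp only [if_neg hm1, if_neg hm2]
            exact hzdist l m hlm
  refine ⟨fun l => if l = i then z j else if l = j then z i else z l,
          fun l => if l = i then Wi' else if l = j then Wj' else Wc l,
          fun l => if h1 : l = i then A.copy (by rw [h1]; simp) (by rw [h1])
            else if h2 : l = j then B.copy (by rw [h2]; simp [hji]) (by rw [h2])
            else (p l).copy (by simp [h1, h2]) rfl,
          ⟨?_, ?_, ?_⟩, ?_, ?_⟩
  · -- (1) conditioning sets and d-separation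
    intro l
    by_cases h1 : l = i
    · simp only [if_pos h1, dif_pos h1]
      refine ⟨fun w hw => ?_, ?_⟩
      · rcases hWi'sub hw with h | h
        · exact (hdse i).1 w h
        · exact (hdse j).1 w h
      · exact hWi'dsep
    · by_cases h2 : l = j
      · simp only [if_neg h1, if_pos h2, dif_neg h1, dif_pos h2]
        refine ⟨fun w hw => ?_, ?_⟩
        · rcases hWj'sub hw with h | h
          · exact (hdse i).1 w h
          · exact (hdse j).1 w h
        · exact hWj'dsep
      · simp only [if_neg h1, if_neg h2]
        exact hdse l
  · -- (2) paths and unblockedness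
    intro l
    by_cases h1 : l = i
    · simp only [if_pos h1, dif_pos h1, isPath_copy, unblocked_copy]
      exact ⟨hApath, hAunb⟩
    · by_cases h2 : l = j
      · simp only [if_neg h1, if_pos h2, dif_neg h1, dif_pos h2, isPath_copy, unblocked_copy]
        exact ⟨hBpath, hBunb⟩
      · simp only [if_neg h1, if_neg h2, dif_neg h1, dif_neg h2, isPath_copy, unblocked_copy]
        exact hpu l
  · -- (3) no sided intersection
    refine sided_of _ ?_ hz'dist (p := p) ?_ hside
    · intro l
      by_cases h1 : l = i
      · simp only [if_pos h1, dif_pos h1, left_copy]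
        exact hLeftA
      · by_cases h2 : l = j
        · simp only [if_neg h1, if_pos h2, dif_neg h1, dif_pos h2, left_copy]
          exact hLeftB
        · simp only [if_neg h1, if_neg h2, dif_neg h1, dif_neg h2, left_copy]
          exact hLeft l
    · intro l
      by_cases h1 : l = i
      · simp only [dif_pos h1, right_copy]
        subst h1
        exact hARight
      · by_cases h2 : l = j
        · simp only [dif_neg h1, dif_pos h2, right_copy]
          subst h2
          exact hBRight
        · simp only [dif_neg h1, dif_neg h2, right_copy]
          exact fun v hv => hv
  · -- (4) half-treks
    intro l
    by_cases h1 : l = i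
    · simp only [dif_pos h1, isHalfTrek_copy]
      exact hAht
    · by_cases h2 : l = j
      · simp only [dif_neg h1, dif_pos h2, isHalfTrek_copy]
        exact hBht
      · simp only [dif_neg h1, dif_neg h2, isHalfTrek_copy]
        exact hht l
  · -- (5) total length decreases
    refine Finset.sum_lt_sum (fun l _ => ?_) ⟨i, Finset.mem_univ i, ?_⟩
    · by_cases h1 : l = i
      · simp only [dif_pos h1, length_copy]
        subst h1
        exact hAlen.le
      · by_cases h2 : l = j
        · simp only [dif_neg h1, dif_pos h2, length_copy]
          subst h2
          exact hBlen.le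
        · simp only [dif_neg h1, dif_neg h2, length_copy]
          exact le_rfl
    · simp only [length_copy, dif_pos]
      exact hAlen

open Walk in
lemma not_biInit_mem_Right {V : Type} {G : MixedGraph V} {a b : V} {w : Walk G a b}
    (hht : w.IsHalfTrek)
    (hnb : ∀ (c : V) (hb : G.stepOK a c .bi) (rest : Walk G c b),
      w ≠ Walk.cons .bi hb rest) :
    a ∈ w.Right := by
  cases w with
  | nil => exact (mem_Right_iff _ _).2 (Or.inl rfl)
  | cons k hk w =>
    cases k with
    | fwd => exact mem_Right_start_of_fwd hk w
    | bwd => exact absurd rfl hht.1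
    | bi => exact absurd rfl (hnb _ hk w)

open Walk in
lemma main_aux {V : Type} (G : MixedGraph V) (k : ℕ) (x : Fin k → V) (y : V)
    (hE : ∀ i, G.dir (x i) y) :
    ∀ (N : ℕ) (z : Fin k → V) (Wc : Fin k → Set V) (p : ∀ i, Walk G (z i) (x i)),
      (∑ i, (p i).length) = N →
      GISWitness G x y z Wc p → (∀ i, (p i).IsHalfTrek) →
      ∃ (z' : Fin k → V) (Wc' : Fin k → Set V) (p' : ∀ i, Walk G (z' i) (x i)),
        GISWitness G x y z' Wc' p' ∧ (∀ i, (p' i).IsHalfTrek) ∧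
        (∀ i j, i ≠ j → z' j ∈ (p' i).support → z' i ∉ (p' j).support) := by
  intro N
  induction N using Nat.strong_induction_on with
  | _ N ih =>
  intro z Wc p hlen hgis hht
  by_cases hmf : ∀ i j, i ≠ j → z j ∈ (p i).support → z i ∉ (p j).support
  · exact ⟨z, Wc, p, hgis, hht, hmf⟩
  · push_neg at hmf
    obtain ⟨i, j, hij, hzji, hzij⟩ := hmf
    obtain ⟨hdse, hpu, hside⟩ := hgis
    have hLeft : ∀ l, (p l).Left = {z l} := fun l => Left_eq_start _ (hht l).no_bwd
    have hzdist : ∀ l m, l ≠ m → z l ≠ z m := by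
      intro l m hlm heq
      have hh := (hside l m hlm).1
      rw [hLeft l, hLeft m, heq] at hh
      have hmem : z m ∈ ({z m} : Set V) ∩ {z m} := ⟨rfl, rfl⟩
      rw [hh] at hmem
      exact hmem
    have hbiInit : ∀ l m : Fin k, l ≠ m → z l ∈ (p m).support →
        ∃ (b : V) (hb : G.stepOK (z l) b .bi) (rest : Walk G b (x l)),
          p l = Walk.cons .bi hb rest := by
      intro l m hlm hmem
      by_contra hcon
      push_neg at hcon
      have hzRl : z l ∈ (p l).Right :=
        not_biInit_mem_Right (hht l) (fun c hb rest heq => hcon c hb rest heq)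
      have hzRm : z l ∈ (p m).Right := (hht m).mem_Right hmem (hzdist l m hlm)
      have hh := (hside l m hlm).2
      have hmem2 : z l ∈ (p l).Right ∩ (p m).Right := ⟨hzRl, hzRm⟩
      rw [hh] at hmem2
      exact hmem2
    -- decompose p i at z j
    obtain ⟨b₁, hb₁, rest₁, hp₁⟩ := hbiInit i j hij hzij
    have hzjr : z j ∈ rest₁.support := by
      have h := hzji
      rw [hp₁] at h
      simp only [support_cons, List.mem_cons] at h
      exact h.resolve_left (hzdist j i (Ne.symm hij))
    obtain ⟨T₁, A, hsplit₁, -⟩ := exists_split_first rest₁ hzjr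
    have hpiPA : p i = (Walk.cons .bi hb₁ T₁).append A := by rw [hp₁, hsplit₁]; rfl
    -- decompose p j at z i
    obtain ⟨b₂, hb₂, rest₂, hp₂⟩ := hbiInit j i (Ne.symm hij) hzji
    have hzir : z i ∈ rest₂.support := by
      have h := hzij
      rw [hp₂] at h
      simp only [support_cons, List.mem_cons] at h
      exact h.resolve_left (hzdist i j hij)
    obtain ⟨T₂, B, hsplit₂, -⟩ := exists_split_first rest₂ hzir
    have hpjPB : p j = (Walk.cons .bi hb₂ T₂).append B := by rw [hp₂, hsplit₂]; rfl
    -- the deleted edge set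
    have hEs : ∀ e ∈ {e : V × V | ∃ m, e = (x m, y)}, e.2 = y := by
      rintro e ⟨m, rfl⟩
      rfl
    -- separators for the two new sources
    obtain ⟨Wi', hWi'sub, hWi'dsep, hWi'unb⟩ :=
      exists_sep hEs (Walk.cons .bi hb₁ T₁) A
        (by rw [← hpiPA]; exact hht i)
        (by rw [← hpiPA]; exact (hpu i).2)
        (hzdist i j hij)
        (hdse i).2 (hdse j).2 (hE i)
    obtain ⟨Wj', hWj'sub, hWj'dsep, hWj'unb⟩ :=
      exists_sep hEs (Walk.cons .bi hb₂ T₂) B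
        (by rw [← hpjPB]; exact hht j)
        (by rw [← hpjPB]; exact (hpu j).2)
        (hzdist j i (Ne.symm hij))
        (hdse j).2 (hdse i).2 (hE j)
    -- properties of the suffixes
    have hApath : A.IsPath := by
      have h := (hpu i).1
      rw [hpiPA] at h
      exact h.of_append_right
    have hBpath : B.IsPath := by
      have h := (hpu j).1
      rw [hpjPB] at h
      exact h.of_append_right
    have hallA : AllFwd A := by
      have h := hht i
      rw [hp₁] at h
      have h2 : AllFwd rest₁ := h.2
      rw [hsplit₁] at h2
      exact h2.of_append_right
    have hallB : AllFwd B := by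
      have h := hht j
      rw [hp₂] at h
      have h2 : AllFwd rest₂ := h.2
      rw [hsplit₂] at h2
      exact h2.of_append_right
    have hARight : A.Right ⊆ (p i).Right := by
      rw [hpiPA]
      exact Right_suffix_subset _ _
    have hBRight : B.Right ⊆ (p j).Right := by
      rw [hpjPB]
      exact Right_suffix_subset _ _
    have hAlen : A.length < (p i).length := by
      have h : (p i).length = ((Walk.cons .bi hb₁ T₁).append A).length := by rw [hpiPA]
      rw [h, length_append, length_cons]
      omega
    have hBlen : B.length < (p j).length := by
      have h : (p j).length = ((Walk.cons .bi hb₂ T₂).append B).length := by rw [hpjPB]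
      rw [h, length_append, length_cons]
      omega
    obtain ⟨z', Wc', p', hgis', hht', hlt⟩ :=
      swap_witness ⟨hdse, hpu, hside⟩ hht hij A B Wi' Wj'
        hApath hWi'unb (IsHalfTrek.of_allFwd hallA) hARight hAlen
        hBpath hWj'unb (IsHalfTrek.of_allFwd hallB) hBRight hBlen
        hWi'sub hWi'dsep (by rw [Set.union_comm]; exact hWj'sub) hWj'dsep
    exact ih _ (hlen ▸ hlt) z' Wc' p' rfl hgis' hht'

/-- **Mutual-intersection removal.** There exists a GIS-witness with all paths half-treks iff
there exists one additionally satisfying: for all `i ≠ j`, if `z_j` lies on `p_i` then `z_i`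
does not lie on `p_j`. -/
theorem gis_mutual_intersection_removal {V : Type} (G : MixedGraph V)
    (k : ℕ) (x : Fin k → V) (y : V) (hE : ∀ i, G.dir (x i) y) :
    (∃ (z : Fin k → V) (Wc : Fin k → Set V) (p : ∀ i, Walk G (z i) (x i)),
      GISWitness G x y z Wc p ∧ ∀ i, (p i).IsHalfTrek) ↔
    (∃ (z : Fin k → V) (Wc : Fin k → Set V) (p : ∀ i, Walk G (z i) (x i)),
      GISWitness G x y z Wc p ∧ (∀ i, (p i).IsHalfTrek) ∧
      (∀ i j, i ≠ j → z j ∈ (p i).support → z i ∉ (p j).support)) := by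
  constructor
  · rintro ⟨z, Wc, p, hgis, hht⟩
    exact main_aux G k x y hE _ z Wc p rfl hgis hht
  · rintro ⟨z, Wc, p, hgis, hht, -⟩
    exact ⟨z, Wc, p, hgis, hht⟩

end SEMPaper
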